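/- Let K = ∏_{i=1}^n [a_i, b_i] ⊂ ℝⁿ be an axis-parallel box with a_i < b_i, and let w : ℝⁿ → ℝ be continuously differentiable. Suppose that ∫_K w dx = 0 and that for each i = 1, …, n and each of the two faces F_i^± = {x ∈ K : x_i = a_i} and {x ∈ K : x_i = b_i}, the integral of w over that face with respect to (n−1)-dimensional Lebesgue measure is zero. Then for all real constants c_1, …, c_n and d_1, …, d_n, ∫_K Σ_{i=1}^n (c_i + d_i·x_i)·(∂w/∂x_i)(x) dx = 0. -/

import Mathlib

open MeasureTheory

/-- Key orthogonality identity in the proof of Lemma 5.4 (condition (H4) for the enriched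
nonconforming rotated Q₁ element): if `w` is C¹ with vanishing mean over the box `K` and
vanishing mean over each face of `K`, then `∫_K Σᵢ (cᵢ + dᵢ·xᵢ)·∂ᵢw dx = 0` for all
constants `cᵢ, dᵢ`. -/
theorem box_orthogonality_identity
    (n : ℕ) (a b : Fin n → ℝ) (hab : ∀ i, a i < b i)
    (w : (Fin n → ℝ) → ℝ) (hw : ContDiff ℝ 1 w)
    (hmean : (∫ x in Set.univ.pi fun i => Set.Icc (a i) (b i), w x) = 0)
    (hface : ∀ i : Fin n, ∀ c ∈ ({a i, b i} : Set ℝ),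
      (∫ y : {j : Fin n // j ≠ i} → ℝ in
          Set.univ.pi fun j => Set.Icc (a j.1) (b j.1),
        w fun j => if h : j = i then c else y ⟨j, h⟩) = 0) :
    ∀ c d : Fin n → ℝ,
      (∫ x in Set.univ.pi fun i => Set.Icc (a i) (b i),
        ∑ i, (c i + d i * x i) * fderiv ℝ w x (Pi.single i 1)) = 0 := by
  intro c d
  have hwdiff : Differentiable ℝ w := hw.differentiable one_ne_zero
  have hwc : Continuous w := hw.continuous
  have hfc : Continuous (fderiv ℝ w) := hw.continuous_fderiv one_ne_zero
  set K : Set (Fin n → ℝ) := Set.univ.pi fun i => Set.Icc (a i) (b i) with hKdef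
  have hKc : IsCompact K := isCompact_univ_pi fun i => isCompact_Icc
  have hintK : ∀ i : Fin n,
      IntegrableOn (fun x => (c i + d i * x i) * fderiv ℝ w x (Pi.single i 1)) K := by
    intro i
    have : Continuous fun x : Fin n → ℝ =>
        (c i + d i * x i) * fderiv ℝ w x (Pi.single i 1) :=
      (continuous_const.add (continuous_const.mul (continuous_apply i))).mul
        (hfc.clm_apply continuous_const)
    exact this.continuousOn.integrableOn_compact hKc
  have key : ∀ i : Fin n,
      (∫ x in K, (c i + d i * x i) * fderiv ℝ w x (Pi.single i 1)) = 0 := by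
    intro i
    classical
    letI : Fintype {j : Fin n // j = i} := Subtype.fintype _
    -- the measurable equivalence splitting off coordinate i
    set e₁ := MeasurableEquiv.piEquivPiSubtypeProd (fun _ : Fin n => ℝ) (fun j => j = i) with he₁
    set e₂ := MeasurableEquiv.piUnique (fun _ : {j : Fin n // j = i} => ℝ) with he₂
    set e := e₁.trans (e₂.prodCongr (MeasurableEquiv.refl ({j : Fin n // j ≠ i} → ℝ)))
      with hedef
    have happ : ∀ x : Fin n → ℝ, e x = (x i, fun j : {j : Fin n // j ≠ i} => x j.1) :=
      fun x => rfl
    have hemp : MeasurePreserving e volume volume := by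
      have h1 : MeasurePreserving e₁ volume volume :=
        volume_preserving_piEquivPiSubtypeProd (fun _ : Fin n => ℝ) (fun j => j = i)
      have h2 : MeasurePreserving (Prod.map ⇑e₂ (id : ({j : Fin n // j ≠ i} → ℝ) → _))
          volume volume :=
        (volume_preserving_piUnique _).prod (MeasurePreserving.id _)
      have : ⇑e = Prod.map ⇑e₂ id ∘ ⇑e₁ := rfl
      rw [this]
      exact h2.comp h1
    set box : Set ({j : Fin n // j ≠ i} → ℝ) :=
      Set.univ.pi fun j => Set.Icc (a j.1) (b j.1) with hbox
    set S : Set (ℝ × ({j : Fin n // j ≠ i} → ℝ)) := Set.Icc (a i) (b i) ×ˢ box with hS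
    -- explicit formula for the inverse
    set Φ : ℝ × ({j : Fin n // j ≠ i} → ℝ) → (Fin n → ℝ) :=
      fun z => fun j => if h : j = i then z.1 else z.2 ⟨j, h⟩ with hΦ
    have hΦe : ∀ x : Fin n → ℝ, Φ (e x) = x := by
      intro x
      funext j
      by_cases h : j = i
      · subst h; simp [hΦ, happ]
      · simp [hΦ, happ, h]
    have hΦc : Continuous Φ := by
      refine continuous_pi fun j => ?_
      by_cases h : j = i
      · simp only [hΦ, dif_pos h]
        exact continuous_fst
      · simp only [hΦ, dif_neg h]
        exact (continuous_apply (⟨j, h⟩ : {j : Fin n // j ≠ i})).comp continuous_snd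
    have hpre : K = e ⁻¹' S := by
      ext x
      simp only [Set.mem_preimage, happ, hS, Set.mem_prod, Set.mem_pi, Set.mem_univ,
        true_implies, hKdef, hbox]
      constructor
      · intro h
        exact ⟨h i, fun j => h j.1⟩
      · rintro ⟨h1, h2⟩ j
        by_cases hj : j = i
        · subst hj; exact h1
        · exact h2 ⟨j, hj⟩
    -- the integrand transported to the product space
    set F : ℝ × ({j : Fin n // j ≠ i} → ℝ) → ℝ :=
      fun z => (c i + d i * z.1) * fderiv ℝ w (Φ z) (Pi.single i 1) with hF
    have hFe : ∀ x : Fin n → ℝ,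
        F (e x) = (c i + d i * x i) * fderiv ℝ w x (Pi.single i 1) := by
      intro x
      have hx := hΦe x
      rw [happ] at hx
      simp only [hF, happ, hx]
    have hFc : Continuous F :=
      (continuous_const.add (continuous_const.mul continuous_fst)).mul
        ((hfc.comp hΦc).clm_apply continuous_const)
    have hSc : IsCompact S := isCompact_Icc.prod (isCompact_univ_pi fun j => isCompact_Icc)
    have hFint : IntegrableOn F S := hFc.continuousOn.integrableOn_compact hSc
    have hWc : Continuous fun z => w (Φ z) := hwc.comp hΦc
    have hWint : IntegrableOn (fun z => w (Φ z)) S :=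
      hWc.continuousOn.integrableOn_compact hSc
    -- restricted product measure form of the integrability statements
    have hFint' : Integrable F
        ((volume.restrict (Set.Icc (a i) (b i))).prod (volume.restrict box)) := by
      rwa [Measure.prod_restrict, ← Measure.volume_eq_prod]
    have hWint' : Integrable (fun z => w (Φ z))
        ((volume.restrict (Set.Icc (a i) (b i))).prod (volume.restrict box)) := by
      rwa [Measure.prod_restrict, ← Measure.volume_eq_prod]
    -- step 1 : transport to the product space
    have step1 : (∫ x in K, (c i + d i * x i) * fderiv ℝ w x (Pi.single i 1))
        = ∫ z in S, F z := by
      rw [hpre, ← hemp.setIntegral_preimage_emb e.measurableEmbedding F S]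
      exact integral_congr_ae (ae_of_all _ fun x => (hFe x).symm)
    -- step 1' : transport of the mean-zero condition
    have hmean' : (∫ z in S, w (Φ z)) = 0 := by
      rw [← hemp.setIntegral_preimage_emb e.measurableEmbedding (fun z => w (Φ z)) S, ← hpre]
      calc (∫ x in K, w (Φ (e x))) = ∫ x in K, w x :=
            integral_congr_ae (ae_of_all _ fun x => by simp only [hΦe])
        _ = 0 := hmean
    -- step 2 : Fubini, integrating first in the i-th coordinate
    have step2 : (∫ z in S, F z)
        = ∫ y in box, ∫ t in Set.Icc (a i) (b i), F (t, y) := by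
      rw [hS, Measure.volume_eq_prod, ← Measure.prod_restrict]
      exact integral_prod_symm F hFint'
    -- step 3 : integration by parts in the inner integral
    have step3 : ∀ y : {j : Fin n // j ≠ i} → ℝ,
        (∫ t in Set.Icc (a i) (b i), F (t, y))
          = (c i + d i * b i) * w (Φ (b i, y)) - (c i + d i * a i) * w (Φ (a i, y))
            - d i * ∫ t in Set.Icc (a i) (b i), w (Φ (t, y)) := by
      intro y
      have hΦty : Continuous fun t : ℝ => Φ (t, y) :=
        hΦc.comp (continuous_id.prodMk continuous_const)
      obtain ⟨z₀, hz₀⟩ : ∃ z₀ : Fin n → ℝ, z₀ = Φ (0, y) := ⟨_, rfl⟩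
      have hline : ∀ t : ℝ, Φ (t, y) = z₀ + t • (Pi.single i 1 : Fin n → ℝ) := by
        intro t
        funext j
        rw [hz₀]
        simp only [hΦ, Pi.add_apply, Pi.smul_apply, smul_eq_mul]
        by_cases h : j = i
        · rw [dif_pos h, dif_pos h]
          subst h
          rw [Pi.single_eq_same, mul_one, zero_add]
        · rw [dif_neg h, dif_neg h, Pi.single_eq_of_ne h, mul_zero, add_zero]
      have hv : ∀ t ∈ Set.uIcc (a i) (b i),
          HasDerivAt (fun t => w (Φ (t, y)))
            (fderiv ℝ w (Φ (t, y)) (Pi.single i 1)) t := by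
        intro t _
        have hL : HasDerivAt (fun t : ℝ => Φ (t, y)) (Pi.single i 1 : Fin n → ℝ) t := by
          simp_rw [hline]
          simpa using ((hasDerivAt_id t).smul_const (Pi.single i 1 : Fin n → ℝ)).const_add z₀
        exact ((hwdiff (Φ (t, y))).hasFDerivAt).comp_hasDerivAt t hL
      have hu : ∀ t ∈ Set.uIcc (a i) (b i),
          HasDerivAt (fun t => c i + d i * t) (d i) t := by
        intro t _
        simpa using ((hasDerivAt_id t).const_mul (d i)).const_add (c i)
      have hv'int : IntervalIntegrable
          (fun t => fderiv ℝ w (Φ (t, y)) (Pi.single i 1)) volume (a i) (b i) :=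
        ((hfc.comp hΦty).clm_apply continuous_const).intervalIntegrable _ _
      have hu'int : IntervalIntegrable (fun _ : ℝ => d i) volume (a i) (b i) :=
        intervalIntegrable_const
      have hibp := intervalIntegral.integral_mul_deriv_eq_deriv_mul hu hv hu'int hv'int
      have hIcc : ∀ g : ℝ → ℝ, (∫ t in Set.Icc (a i) (b i), g t)
          = ∫ t in (a i)..(b i), g t := by
        intro g
        rw [intervalIntegral.integral_of_le (hab i).le, integral_Icc_eq_integral_Ioc]
      rw [hIcc fun t => F (t, y), hIcc fun t => w (Φ (t, y))]
      calc (∫ t in (a i)..(b i), F (t, y))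
          = ∫ t in (a i)..(b i), (c i + d i * t) * fderiv ℝ w (Φ (t, y)) (Pi.single i 1) :=
            rfl
        _ = (c i + d i * b i) * w (Φ (b i, y)) - (c i + d i * a i) * w (Φ (a i, y))
            - ∫ t in (a i)..(b i), d i * w (Φ (t, y)) := hibp
        _ = (c i + d i * b i) * w (Φ (b i, y)) - (c i + d i * a i) * w (Φ (a i, y))
            - d i * ∫ t in (a i)..(b i), w (Φ (t, y)) := by
            rw [intervalIntegral.integral_const_mul]
    -- integrability over the box of the three pieces
    have hboxc : IsCompact box := isCompact_univ_pi fun j => isCompact_Icc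
    have hf1 : IntegrableOn (fun y => w (Φ (b i, y))) box :=
      ((hwc.comp (hΦc.comp (continuous_const.prodMk
        continuous_id))).continuousOn).integrableOn_compact hboxc
    have hf2 : IntegrableOn (fun y => w (Φ (a i, y))) box :=
      ((hwc.comp (hΦc.comp (continuous_const.prodMk
        continuous_id))).continuousOn).integrableOn_compact hboxc
    have hf3 : IntegrableOn (fun y => ∫ t in Set.Icc (a i) (b i), w (Φ (t, y))) box :=
      hWint'.integral_prod_right
    -- face integrals vanish
    have hfaceb : (∫ y in box, w (Φ (b i, y))) = 0 := by
      have := hface i (b i) (by simp)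
      simpa only [hΦ] using this
    have hfacea : (∫ y in box, w (Φ (a i, y))) = 0 := by
      have := hface i (a i) (by simp)
      simpa only [hΦ] using this
    -- the double integral of w equals the integral over K, hence vanishes
    have hdouble : (∫ y in box, ∫ t in Set.Icc (a i) (b i), w (Φ (t, y))) = 0 := by
      rw [← integral_prod_symm _ hWint', Measure.prod_restrict, ← Measure.volume_eq_prod]
      exact hmean'
    -- putting everything together
    rw [step1, step2]
    calc (∫ y in box, ∫ t in Set.Icc (a i) (b i), F (t, y))
        = ∫ y in box, ((c i + d i * b i) * w (Φ (b i, y))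
            - (c i + d i * a i) * w (Φ (a i, y))
            - d i * ∫ t in Set.Icc (a i) (b i), w (Φ (t, y))) :=
          integral_congr_ae (ae_of_all _ fun y => step3 y)
      _ = (c i + d i * b i) * (∫ y in box, w (Φ (b i, y)))
            - (c i + d i * a i) * (∫ y in box, w (Φ (a i, y)))
            - d i * ∫ y in box, ∫ t in Set.Icc (a i) (b i), w (Φ (t, y)) := by
          have hA1 : IntegrableOn (fun y => (c i + d i * b i) * w (Φ (b i, y))) box :=
            hf1.const_mul _
          have hA2 : IntegrableOn (fun y => (c i + d i * a i) * w (Φ (a i, y))) box :=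
            hf2.const_mul _
          have hA : IntegrableOn (fun y => (c i + d i * b i) * w (Φ (b i, y))
              - (c i + d i * a i) * w (Φ (a i, y))) box := hA1.sub hA2
          have hB : IntegrableOn
              (fun y => d i * ∫ t in Set.Icc (a i) (b i), w (Φ (t, y))) box :=
            hf3.const_mul _
          rw [integral_sub hA hB, integral_sub hA1 hA2,
            integral_const_mul, integral_const_mul, integral_const_mul]
      _ = 0 := by rw [hfaceb, hfacea, hdouble]; ring
  rw [integral_finset_sum Finset.univ fun i _ => hintK i]
  exact Finset.sum_eq_zero fun i _ => key i
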